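/- arXiv:1202.6611 — 3 statements merged into one kernel-verified Lean document; each statement's English description precedes it below -/
import Mathlib

section
/- (Uniform approximate identity.) Let θ be a set, f ∈ L¹(ℝ,ℂ), and for each ϑ ∈ θ, n ∈ ℕ let f_{ϑ,n}, δ_{ϑ,n} ∈ L¹(ℝ,ℂ). Assume: (a) sup_ϑ ‖f_{ϑ,n} − f‖_{L¹} → 0; (b) there exists c > 0 with ‖δ_{ϑ,n}‖_{L¹} ≤ c for all n, ϑ; (c) ∫_ℝ δ_{ϑ,n}(y) dy = c_ϑ for all n, ϑ, for constants c_ϑ ∈ ℂ; (d) for every neighborhood V of 0, sup_ϑ ∫_{V^c} |δ_{ϑ,n}(y)| dy → 0 as n → ∞. Then sup_ϑ ‖δ_{ϑ,n} * f_{ϑ,n} − c_ϑ f‖_{L¹(ℝ,ℂ)} → 0 as n → ∞. -/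
open MeasureTheory Filter



lemma l1_add (u v : ℝ → ℂ) (hu : Integrable u) (hv : Integrable v) :
    (∫ x, ‖u x + v x‖) ≤ (∫ x, ‖u x‖) + ∫ x, ‖v x‖ := by
  refine le_trans (integral_mono_of_nonneg (Eventually.of_forall fun x => norm_nonneg (u x + v x))
    (show Integrable fun x => ‖u x‖ + ‖v x‖ from hu.norm.add hv.norm)
    (Eventually.of_forall fun x => norm_add_le (u x) (v x)))
    (le_of_eq (integral_add hu.norm hv.norm))

lemma translate_cont_of_cs (g : ℝ → ℂ) (hg_cont : Continuous g) (hg_supp : HasCompactSupport g) :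
    Tendsto (fun y : ℝ => ∫ x, ‖g (x - y) - g x‖) (nhds 0) (nhds 0) := by
  obtain ⟨C, hC⟩ := hg_cont.bounded_above_of_compact_support hg_supp
  set K : Set ℝ := Metric.cthickening 1 (tsupport g) with hK
  have hKc : IsCompact K := hg_supp.cthickening
  have key : Tendsto (fun y : ℝ => ∫ x, ‖g (x - y) - g x‖) (nhds 0) (nhds (∫ _ : ℝ, (0:ℝ))) := by
    apply tendsto_integral_filter_of_dominated_convergence (K.indicator fun _ => 2 * C)
    · exact Eventually.of_forall fun y =>
        (continuous_norm.comp ((hg_cont.comp (continuous_id.sub continuous_const)).sub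
          hg_cont)).aestronglyMeasurable
    · filter_upwards [Metric.closedBall_mem_nhds (0:ℝ) one_pos] with y hy
      refine Eventually.of_forall fun x => ?_
      rw [Real.norm_of_nonneg (norm_nonneg _)]
      by_cases hx : x ∈ K
      · rw [Set.indicator_of_mem hx]
        calc ‖g (x - y) - g x‖ ≤ ‖g (x - y)‖ + ‖g x‖ := norm_sub_le _ _
          _ ≤ C + C := add_le_add (hC _) (hC _)
          _ = 2 * C := by ring
      · rw [Set.indicator_of_notMem hx]
        have hx1 : x ∉ tsupport g := fun h => hx (Metric.self_subset_cthickening _ h)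
        have hx2 : x - y ∉ tsupport g := by
          intro h
          apply hx
          apply Metric.mem_cthickening_of_dist_le x (x - y) 1 _ h
          simpa [dist_eq_norm] using (by simpa [Metric.mem_closedBall, dist_eq_norm] using hy)
        rw [image_eq_zero_of_notMem_tsupport hx1, image_eq_zero_of_notMem_tsupport hx2]
        simp
    · exact (IntegrableOn.integrable_indicator
        ((integrableOn_const_iff).mpr (Or.inr hKc.measure_lt_top)) hKc.measurableSet)
    · refine Eventually.of_forall fun x => ?_
      have : Tendsto (fun y : ℝ => ‖g (x - y) - g x‖) (nhds 0) (nhds ‖g (x - 0) - g x‖) := by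
        exact ((hg_cont.comp (continuous_const.sub continuous_id)).sub
          continuous_const).norm.tendsto 0
      simpa using this
  simpa using key

lemma translate_tendsto (f : ℝ → ℂ) (hf : Integrable f) :
    Tendsto (fun y : ℝ => ∫ x, ‖f (x - y) - f x‖) (nhds 0) (nhds 0) := by
  rw [Metric.tendsto_nhds]
  intro ε hε
  obtain ⟨g, hg_supp, hfg, hg_cont, hg_int⟩ :=
    hf.exists_hasCompactSupport_integral_sub_le (show (0:ℝ) < ε/4 by linarith)
  have hgc := translate_cont_of_cs g hg_cont hg_supp
  rw [Metric.tendsto_nhds] at hgc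
  filter_upwards [hgc (ε/4) (by linarith)] with y hy
  simp only [Real.dist_eq, sub_zero] at hy ⊢
  have hInt1 : Integrable (fun x => f (x - y) - g (x - y)) := (hf.sub hg_int).comp_sub_right y
  have hInt2 : Integrable (fun x => g (x - y) - g x) :=
    (hg_int.comp_sub_right y).sub hg_int
  have hInt3 : Integrable (fun x => g x - f x) := hg_int.sub hf
  have key : (∫ x, ‖f (x - y) - f x‖)
      ≤ (∫ x, ‖f (x - y) - g (x - y)‖) + ((∫ x, ‖g (x - y) - g x‖) + ∫ x, ‖g x - f x‖) := by
    calc (∫ x, ‖f (x - y) - f x‖)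
        = ∫ x, ‖(f (x - y) - g (x - y)) + ((g (x - y) - g x) + (g x - f x))‖ := by
          apply integral_congr_ae
          filter_upwards with x
          rw [show f (x - y) - f x
            = (f (x - y) - g (x - y)) + ((g (x - y) - g x) + (g x - f x)) by ring]
      _ ≤ (∫ x, ‖f (x - y) - g (x - y)‖) + ∫ x, ‖(g (x - y) - g x) + (g x - f x)‖ :=
          l1_add _ _ hInt1 (hInt2.add hInt3)
      _ ≤ _ := by
          have := l1_add _ _ hInt2 hInt3
          linarith
  have e1 : (∫ x, ‖f (x - y) - g (x - y)‖) = ∫ x, ‖f x - g x‖ :=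
    integral_sub_right_eq_self (fun x => ‖f x - g x‖) y
  have e2 : (∫ x, ‖g x - f x‖) = ∫ x, ‖f x - g x‖ := by
    simp_rw [norm_sub_rev (g _)]
  have habs : |∫ x, ‖g (x - y) - g x‖| = ∫ x, ‖g (x - y) - g x‖ :=
    abs_of_nonneg (integral_nonneg fun x => norm_nonneg _)
  have h0 : (0:ℝ) ≤ ∫ x, ‖f (x - y) - f x‖ := integral_nonneg fun x => norm_nonneg _
  rw [abs_of_nonneg h0]
  rw [e1, e2] at key
  rw [habs] at hy
  linarith

lemma minkowski_aux (F : ℝ → ℝ → ℂ)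
    (hF : Integrable (fun p : ℝ × ℝ => F p.1 p.2) ((volume : Measure ℝ).prod volume)) :
    (∫ x, ‖∫ y, F x y‖) ≤ ∫ y, ∫ x, ‖F x y‖ := by
  have h1 : (∫ x, ‖∫ y, F x y‖) ≤ ∫ x, ∫ y, ‖F x y‖ :=
    integral_mono_of_nonneg (Eventually.of_forall fun x => norm_nonneg _)
      hF.integral_norm_prod_left (Eventually.of_forall fun x => norm_integral_le_integral_norm _)
  have h2 : (∫ x, ∫ y, ‖F x y‖) = ∫ y, ∫ x, ‖F x y‖ := integral_integral_swap hF.norm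
  linarith


theorem uniform_approximate_identity {θ : Type*}
    (f : ℝ → ℂ) (fn : θ → ℕ → ℝ → ℂ) (dn : θ → ℕ → ℝ → ℂ) (cϑ : θ → ℂ)
    (hf : Integrable f)
    (hfn : ∀ ϑ n, Integrable (fn ϑ n)) (hdn : ∀ ϑ n, Integrable (dn ϑ n))
    (hfconv : ∀ ε > (0:ℝ), ∀ᶠ n in atTop, ∀ ϑ, (∫ x, ‖fn ϑ n x - f x‖) ≤ ε)
    (hc : ∃ c > (0:ℝ), ∀ ϑ n, (∫ y, ‖dn ϑ n y‖) ≤ c)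
    (hnorm : ∀ ϑ n, (∫ y, dn ϑ n y) = cϑ ϑ)
    (hmass : ∀ V ∈ nhds (0:ℝ), ∀ ε > (0:ℝ), ∀ᶠ n in atTop, ∀ ϑ,
      (∫ y in Vᶜ, ‖dn ϑ n y‖) ≤ ε) :
    ∀ ε > (0:ℝ), ∀ᶠ n in atTop, ∀ ϑ,
      (∫ x, ‖(∫ y, dn ϑ n (x - y) * fn ϑ n y) - cϑ ϑ * f x‖) ≤ ε := by
  obtain ⟨c, hc0, hcb⟩ := hc
  intro ε hε
  set M : ℝ := ∫ x, ‖f x‖ with hM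
  have hM0 : 0 ≤ M := integral_nonneg fun x => norm_nonneg _
  set ε₁ : ℝ := ε / (3 * c) with hε₁
  have hε₁0 : 0 < ε₁ := by positivity
  set ε₂ : ℝ := ε / (3 * (2 * M + 1)) with hε₂
  have hε₂0 : 0 < ε₂ := by positivity
  have hev : ∀ᶠ y in nhds (0:ℝ), (∫ x, ‖f (x - y) - f x‖) < ε₁ :=
    (tendsto_order.1 (translate_tendsto f hf)).2 ε₁ hε₁0
  obtain ⟨δ, hδ0, hδ⟩ := Metric.eventually_nhds_iff.mp hev
  set V : Set ℝ := Metric.closedBall 0 (δ/2) with hVdef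
  have hVmeas : MeasurableSet V := measurableSet_closedBall
  have hVnhds : V ∈ nhds (0:ℝ) := Metric.closedBall_mem_nhds 0 (by linarith)
  have hVsmall : ∀ y ∈ V, (∫ x, ‖f (x - y) - f x‖) ≤ ε₁ := by
    intro y hy
    have : dist y 0 < δ := lt_of_le_of_lt (Metric.mem_closedBall.mp hy) (by linarith)
    exact (hδ this).le
  have hgbar2M : ∀ y : ℝ, (∫ x, ‖f (x - y) - f x‖) ≤ 2 * M := by
    intro y
    have h1 : (∫ x, ‖f (x - y) - f x‖) ≤ ∫ x, (‖f (x - y)‖ + ‖f x‖) :=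
      integral_mono_of_nonneg (Eventually.of_forall fun x => norm_nonneg _)
        (show Integrable fun x => ‖f (x - y)‖ + ‖f x‖ from
          (hf.comp_sub_right y).norm.add hf.norm)
        (Eventually.of_forall fun x => norm_sub_le _ _)
    have h2 : (∫ x, (‖f (x - y)‖ + ‖f x‖)) = (∫ x, ‖f (x - y)‖) + ∫ x, ‖f x‖ :=
      integral_add (hf.comp_sub_right y).norm hf.norm
    have h3 : (∫ x, ‖f (x - y)‖) = M := integral_sub_right_eq_self (fun x => ‖f x‖) y
    rw [h2, h3, ← hM] at h1
    linarith
  filter_upwards [hfconv ε₁ hε₁0, hmass V hVnhds ε₂ hε₂0] with n h1 h2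
  intro ϑ
  set d : ℝ → ℂ := dn ϑ n with hddef
  set F : ℝ → ℂ := fn ϑ n with hFdef
  have hd : Integrable d := hdn ϑ n
  have hFi : Integrable F := hfn ϑ n
  have hh : Integrable (fun y => F y - f y) := hFi.sub hf
  -- product integrability
  have PB : Integrable (fun p : ℝ × ℝ => d (p.1 - p.2) * (F p.2 - f p.2))
      ((volume : Measure ℝ).prod volume) :=
    (hh.convolution_integrand (ContinuousLinearMap.mul ℝ ℂ) hd).congr
      (Eventually.of_forall fun p => by simp only [ContinuousLinearMap.mul_apply']; ring)
  have PA1 : Integrable (fun p : ℝ × ℝ => d p.2 * f (p.1 - p.2))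
      ((volume : Measure ℝ).prod volume) :=
    (hd.convolution_integrand (ContinuousLinearMap.mul ℝ ℂ) hf).congr
      (Eventually.of_forall fun p => by simp only [ContinuousLinearMap.mul_apply'])
  have PA2 : Integrable (fun p : ℝ × ℝ => d p.2 * f p.1)
      ((volume : Measure ℝ).prod volume) :=
    (hf.mul_prod hd).congr (Eventually.of_forall fun p => mul_comm _ _)
  have PA : Integrable (fun p : ℝ × ℝ => d p.2 * (f (p.1 - p.2) - f p.1))
      ((volume : Measure ℝ).prod volume) :=
    (PA1.sub PA2).congr (Eventually.of_forall fun p => (mul_sub _ _ _).symm)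
  have PF : Integrable (fun p : ℝ × ℝ => d (p.1 - p.2) * F p.2)
      ((volume : Measure ℝ).prod volume) :=
    (hFi.convolution_integrand (ContinuousLinearMap.mul ℝ ℂ) hd).congr
      (Eventually.of_forall fun p => by simp only [ContinuousLinearMap.mul_apply']; ring)
  have Pf : Integrable (fun p : ℝ × ℝ => d (p.1 - p.2) * f p.2)
      ((volume : Measure ℝ).prod volume) :=
    (hf.convolution_integrand (ContinuousLinearMap.mul ℝ ℂ) hd).congr
      (Eventually.of_forall fun p => by simp only [ContinuousLinearMap.mul_apply']; ring)
  set A : ℝ → ℂ := fun x => ∫ y, d y * (f (x - y) - f x) with hA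
  set B : ℝ → ℂ := fun x => ∫ y, d (x - y) * (F y - f y) with hB
  have hAint : Integrable A := PA.integral_prod_left
  have hBint : Integrable B := PB.integral_prod_left
  -- a.e. decomposition
  have hae : ∀ᵐ x : ℝ, (∫ y, d (x - y) * F y) - cϑ ϑ * f x = A x + B x := by
    filter_upwards [PF.prod_right_ae, Pf.prod_right_ae, PA1.prod_right_ae] with x s1 s2 s3
    have s4 : Integrable (fun y => d (x - y) * (F y - f y)) :=
      (s1.sub s2).congr (Eventually.of_forall fun y => (mul_sub _ _ _).symm)
    have e1 : (∫ y, d (x - y) * F y)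
        = (∫ y, d (x - y) * f y) + ∫ y, d (x - y) * (F y - f y) := by
      rw [← integral_add s2 s4]
      exact integral_congr_ae (Eventually.of_forall fun y => by ring)
    have e2 : (∫ y, d (x - y) * f y) = ∫ y, d y * f (x - y) := by
      have := integral_sub_left_eq_self (fun y => d y * f (x - y)) volume x
      simpa using this
    have e3 : cϑ ϑ * f x = ∫ y, d y * f x := by
      rw [integral_mul_const, hnorm ϑ n]
    have e4 : (∫ y, d y * f (x - y)) - cϑ ϑ * f x = A x := by
      rw [e3, ← integral_sub s3 (hd.mul_const (f x))]
      exact integral_congr_ae (Eventually.of_forall fun y => by ring)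
    calc (∫ y, d (x - y) * F y) - cϑ ϑ * f x
        = ((∫ y, d y * f (x - y)) - cϑ ϑ * f x) + ∫ y, d (x - y) * (F y - f y) := by
          rw [e1, e2]; ring
      _ = A x + B x := by rw [e4]
  -- bound for B
  have hd1 : (∫ y, ‖d y‖) ≤ c := hcb ϑ n
  have hd1nonneg : (0:ℝ) ≤ ∫ y, ‖d y‖ := integral_nonneg fun y => norm_nonneg _
  have hB_le : (∫ x, ‖B x‖) ≤ ε / 3 := by
    have hmk := minkowski_aux (fun x y => d (x - y) * (F y - f y)) PB
    have hin : ∀ y : ℝ, (∫ x, ‖d (x - y) * (F y - f y)‖) = (∫ z, ‖d z‖) * ‖F y - f y‖ := by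
      intro y
      calc (∫ x, ‖d (x - y) * (F y - f y)‖) = ∫ x, ‖d (x - y)‖ * ‖F y - f y‖ := by
            simp [norm_mul]
        _ = (∫ x, ‖d (x - y)‖) * ‖F y - f y‖ := integral_mul_const _ _
        _ = (∫ z, ‖d z‖) * ‖F y - f y‖ := by
            rw [integral_sub_right_eq_self (fun z => ‖d z‖) y]
    have heq : (∫ y, ∫ x, ‖d (x - y) * (F y - f y)‖) = (∫ z, ‖d z‖) * ∫ y, ‖F y - f y‖ := by
      rw [integral_congr_ae (Eventually.of_forall hin)]
      exact integral_const_mul _ _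
    have hFf : (0:ℝ) ≤ ∫ y, ‖F y - f y‖ := integral_nonneg fun y => norm_nonneg _
    have hbound : (∫ z, ‖d z‖) * (∫ y, ‖F y - f y‖) ≤ c * ε₁ :=
      mul_le_mul hd1 (h1 ϑ) hFf hc0.le
    have hcε : c * ε₁ = ε / 3 := by
      rw [hε₁]; field_simp
    calc (∫ x, ‖B x‖) ≤ ∫ y, ∫ x, ‖d (x - y) * (F y - f y)‖ := hmk
      _ = (∫ z, ‖d z‖) * ∫ y, ‖F y - f y‖ := heq
      _ ≤ c * ε₁ := hbound
      _ = ε / 3 := hcε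
  -- bound for A
  have hA_le : (∫ x, ‖A x‖) ≤ ε / 3 + ε / 3 := by
    have hmk := minkowski_aux (fun x y => d y * (f (x - y) - f x)) PA
    have hin : ∀ y : ℝ, (∫ x, ‖d y * (f (x - y) - f x)‖)
        = ‖d y‖ * ∫ x, ‖f (x - y) - f x‖ := by
      intro y
      calc (∫ x, ‖d y * (f (x - y) - f x)‖) = ∫ x, ‖d y‖ * ‖f (x - y) - f x‖ := by
            simp [norm_mul]
        _ = ‖d y‖ * ∫ x, ‖f (x - y) - f x‖ := integral_const_mul _ _
    have hint : Integrable (fun y => ‖d y‖ * ∫ x, ‖f (x - y) - f x‖) :=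
      PA.integral_norm_prod_right.congr (Eventually.of_forall hin)
    have hsplit : (∫ y, ‖d y‖ * ∫ x, ‖f (x - y) - f x‖)
        = (∫ y in V, ‖d y‖ * ∫ x, ‖f (x - y) - f x‖)
          + ∫ y in Vᶜ, ‖d y‖ * ∫ x, ‖f (x - y) - f x‖ := by
      rw [MeasureTheory.integral_add_compl hVmeas hint]
    have hV_le : (∫ y in V, ‖d y‖ * ∫ x, ‖f (x - y) - f x‖) ≤ ε / 3 := by
      have step1 : (∫ y in V, ‖d y‖ * ∫ x, ‖f (x - y) - f x‖) ≤ ∫ y in V, ‖d y‖ * ε₁ :=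
        setIntegral_mono_on hint.integrableOn (hd.norm.mul_const ε₁).integrableOn hVmeas
          (fun y hy => mul_le_mul_of_nonneg_left (hVsmall y hy) (norm_nonneg _))
      have step2 : (∫ y in V, ‖d y‖ * ε₁) = (∫ y in V, ‖d y‖) * ε₁ := integral_mul_const _ _
      have step3 : (∫ y in V, ‖d y‖) ≤ ∫ y, ‖d y‖ :=
        setIntegral_le_integral hd.norm (Eventually.of_forall fun y => norm_nonneg _)
      have : (∫ y in V, ‖d y‖) * ε₁ ≤ c * ε₁ :=
        mul_le_mul_of_nonneg_right (step3.trans hd1) hε₁0.le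
      have hcε : c * ε₁ = ε / 3 := by rw [hε₁]; field_simp
      linarith
    have hVc_le : (∫ y in Vᶜ, ‖d y‖ * ∫ x, ‖f (x - y) - f x‖) ≤ ε / 3 := by
      have step1 : (∫ y in Vᶜ, ‖d y‖ * ∫ x, ‖f (x - y) - f x‖)
          ≤ ∫ y in Vᶜ, ‖d y‖ * (2 * M) :=
        setIntegral_mono_on hint.integrableOn (hd.norm.mul_const (2 * M)).integrableOn
          hVmeas.compl
          (fun y _ => mul_le_mul_of_nonneg_left (hgbar2M y) (norm_nonneg _))
      have step2 : (∫ y in Vᶜ, ‖d y‖ * (2 * M)) = (∫ y in Vᶜ, ‖d y‖) * (2 * M) :=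
        integral_mul_const _ _
      have step3 : (∫ y in Vᶜ, ‖d y‖) * (2 * M) ≤ ε₂ * (2 * M) :=
        mul_le_mul_of_nonneg_right (h2 ϑ) (by linarith)
      have step4 : ε₂ * (2 * M) ≤ ε / 3 := by
        have hkey : ε₂ * (3 * (2 * M + 1)) = ε := by
          rw [hε₂]; field_simp
        nlinarith [hε₂0.le, hM0]
      linarith
    calc (∫ x, ‖A x‖) ≤ ∫ y, ∫ x, ‖d y * (f (x - y) - f x)‖ := hmk
      _ = ∫ y, ‖d y‖ * ∫ x, ‖f (x - y) - f x‖ :=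
          integral_congr_ae (Eventually.of_forall hin)
      _ ≤ ε / 3 + ε / 3 := by rw [hsplit]; exact add_le_add hV_le hVc_le
  -- conclusion
  calc (∫ x, ‖(∫ y, d (x - y) * F y) - cϑ ϑ * f x‖)
      = ∫ x, ‖A x + B x‖ := integral_congr_ae (hae.mono fun x hx => by simp only [hx])
    _ ≤ (∫ x, ‖A x‖) + ∫ x, ‖B x‖ := l1_add A B hAint hBint
    _ ≤ (ε / 3 + ε / 3) + ε / 3 := add_le_add hA_le hB_le
    _ = ε := by ring
end

section
/- (Generalized Slutsky lemma for uniform convergence.) Let θ be a set and X_{ϑ,n}, Y_{ϑ,n} (ϑ ∈ θ, n ∈ ℕ) and X be ℝ^d-valued random vectors, Z_{ϑ,n} real random variables. Suppose: (i) sup_{ϑ} sup_B |P(X_{ϑ,n} ∈ B) − P(X ∈ B)| → 0 where the inner supremum is over all Borel sets B (uniform convergence in total variation); (ii) for every δ > 0, sup_ϑ P(|Y_{ϑ,n}| ≥ δ) → 0; (iii) for every δ > 0, sup_ϑ P(|Z_{ϑ,n} − 1| ≥ δ) → 0. Then for every Borel set B with P(X ∈ ∂B) = 0, sup_ϑ |P(Z_{ϑ,n}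 X_{ϑ,n} + Y_{ϑ,n} ∈ B) − P(X ∈ B)| → 0 as n → ∞. -/
open MeasureTheory Filter Metric Set Topology

lemma aux_abs_toReal_sub_le {Ω : Type*} [MeasurableSpace Ω] (μ : Measure Ω)
    [IsFiniteMeasure μ] {A C E : Set Ω} (h1 : A \ C ⊆ E) (h2 : C \ A ⊆ E) :
    |(μ A).toReal - (μ C).toReal| ≤ (μ E).toReal := by
  have key : ∀ A C : Set Ω, A \ C ⊆ E → (μ A).toReal ≤ (μ C).toReal + (μ E).toReal := by
    intro A C h
    have hle : μ A ≤ μ C + μ E := by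
      calc μ A ≤ μ (C ∪ E) := measure_mono (fun x hx => by
            by_cases hc : x ∈ C
            · exact Or.inl hc
            · exact Or.inr (h ⟨hx, hc⟩))
        _ ≤ μ C + μ E := measure_union_le _ _
    exact ENNReal.toReal_le_add hle (measure_ne_top μ C) (measure_ne_top μ E)
  rw [abs_sub_le_iff]
  constructor
  · linarith [key A C h1]
  · linarith [key C A h2]

lemma aux_toReal_union_le {Ω : Type*} [MeasurableSpace Ω] (μ : Measure Ω)
    [IsFiniteMeasure μ] (a b : Set Ω) :
    (μ (a ∪ b)).toReal ≤ (μ a).toReal + (μ b).toReal :=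
  ENNReal.toReal_le_add (measure_union_le a b) (measure_ne_top μ a) (measure_ne_top μ b)

lemma aux_ball_iff {E : Type*} [NormedAddCommGroup E] [NormedSpace ℝ E]
    {B : Set E} {x w : E} {η : ℝ} (hη : 0 < η)
    (hdisj : ∀ y ∈ Metric.ball x η, y ∉ frontier B)
    (hw : w ∈ Metric.ball x η) : (w ∈ B ↔ x ∈ B) := by
  have hconn : IsPreconnected (Metric.ball x η) := (convex_ball x η).isPreconnected
  have hsub : Metric.ball x η ⊆ interior B ∪ (closure B)ᶜ := by
    intro y hy
    by_cases h : y ∈ closure B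
    · by_cases h' : y ∈ interior B
      · exact Or.inl h'
      · exact absurd ⟨h, h'⟩ (hdisj y hy)
    · exact Or.inr h
  have hx : x ∈ Metric.ball x η := Metric.mem_ball_self hη
  rcases hconn.subset_or_subset isOpen_interior isClosed_closure.isOpen_compl
      (Disjoint.mono_left interior_subset_closure disjoint_compl_right) hsub with h | h
  · exact ⟨fun _ => interior_subset (h hx), fun _ => interior_subset (h hw)⟩
  · exact ⟨fun hwB => (h hw (subset_closure hwB)).elim,
      fun hxB => (h hx (subset_closure hxB)).elim⟩

theorem uniform_slutsky {θ : Type*} {d : ℕ}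
    (Ω : θ → ℕ → Type*) [∀ ϑ n, MeasurableSpace (Ω ϑ n)]
    (P : ∀ ϑ n, Measure (Ω ϑ n)) [∀ ϑ n, IsProbabilityMeasure (P ϑ n)]
    (Ω₀ : Type*) [MeasurableSpace Ω₀] (P₀ : Measure Ω₀) [IsProbabilityMeasure P₀]
    (X : ∀ ϑ n, Ω ϑ n → EuclideanSpace ℝ (Fin d))
    (Y : ∀ ϑ n, Ω ϑ n → EuclideanSpace ℝ (Fin d))
    (Z : ∀ ϑ n, Ω ϑ n → ℝ)
    (X₀ : Ω₀ → EuclideanSpace ℝ (Fin d))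
    (hX : ∀ ϑ n, Measurable (X ϑ n)) (hY : ∀ ϑ n, Measurable (Y ϑ n))
    (hZ : ∀ ϑ n, Measurable (Z ϑ n)) (hX₀ : Measurable X₀)
    -- (i) uniform convergence in total variation
    (hTV : ∀ ε > (0:ℝ), ∀ᶠ n in atTop, ∀ ϑ, ∀ B : Set (EuclideanSpace ℝ (Fin d)),
      MeasurableSet B →
        |(P ϑ n (X ϑ n ⁻¹' B)).toReal - (P₀ (X₀ ⁻¹' B)).toReal| ≤ ε)
    -- (ii) Y converges to 0 uniformly in probability
    (hYconv : ∀ δ > (0:ℝ), ∀ ε > (0:ℝ), ∀ᶠ n in atTop, ∀ ϑ,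
      (P ϑ n {ω | δ ≤ ‖Y ϑ n ω‖}).toReal ≤ ε)
    -- (iii) Z converges to 1 uniformly in probability
    (hZconv : ∀ δ > (0:ℝ), ∀ ε > (0:ℝ), ∀ᶠ n in atTop, ∀ ϑ,
      (P ϑ n {ω | δ ≤ |Z ϑ n ω - 1|}).toReal ≤ ε) :
    ∀ B : Set (EuclideanSpace ℝ (Fin d)), MeasurableSet B →
      P₀ (X₀ ⁻¹' frontier B) = 0 →
      ∀ ε > (0:ℝ), ∀ᶠ n in atTop, ∀ ϑ,
        |(P ϑ n ((fun ω => Z ϑ n ω • X ϑ n ω + Y ϑ n ω) ⁻¹' B)).toReal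
          - (P₀ (X₀ ⁻¹' B)).toReal| ≤ ε := by
  intro B hB hB0 ε hε
  set μ₀ : Measure (EuclideanSpace ℝ (Fin d)) := P₀.map X₀ with hμ₀def
  haveI : IsProbabilityMeasure μ₀ := Measure.isProbabilityMeasure_map hX₀.aemeasurable
  have hmap : ∀ S : Set (EuclideanSpace ℝ (Fin d)), MeasurableSet S →
      μ₀ S = P₀ (X₀ ⁻¹' S) := fun S hS => Measure.map_apply hX₀ hS
  have hε10 : (0:ℝ) < ε/10 := by linarith
  have hof : (0:ENNReal) < ENNReal.ofReal (ε/10) := ENNReal.ofReal_pos.2 hε10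
  -- choose M
  have htendM : Tendsto (fun m : ℕ => μ₀ {x : EuclideanSpace ℝ (Fin d) | (m:ℝ) ≤ ‖x‖})
      atTop (𝓝 0) := by
    have h := tendsto_measure_iInter_atTop (μ := μ₀)
      (s := fun m : ℕ => {x : EuclideanSpace ℝ (Fin d) | (m:ℝ) ≤ ‖x‖})
      (fun m => ((isClosed_le continuous_const continuous_norm).measurableSet).nullMeasurableSet)
      (fun a b hab x hx => by
        simp only [Set.mem_setOf_eq] at *
        exact le_trans (Nat.cast_le.2 hab) hx)
      ⟨0, measure_ne_top _ _⟩
    have hempty : (⋂ m : ℕ, {x : EuclideanSpace ℝ (Fin d) | (m:ℝ) ≤ ‖x‖}) = ∅ := by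
      ext x
      simp only [Set.mem_iInter, Set.mem_setOf_eq, Set.mem_empty_iff_false, iff_false, not_forall]
      obtain ⟨m, hm⟩ := exists_nat_gt ‖x‖
      exact ⟨m, not_le.2 hm⟩
    rw [hempty, measure_empty] at h
    exact h
  obtain ⟨m, hmS, hm1⟩ :=
    ((htendM.eventually (gt_mem_nhds hof)).and (eventually_ge_atTop 1)).exists
  set M : ℝ := (m : ℝ) with hMdef
  have hMpos : (0:ℝ) < M := by
    have : (1:ℝ) ≤ (m:ℝ) := by exact_mod_cast hm1
    linarith
  set S : Set (EuclideanSpace ℝ (Fin d)) := {x | M ≤ ‖x‖} with hSdef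
  have hSmeas : MeasurableSet S := (isClosed_le continuous_const continuous_norm).measurableSet
  -- choose η
  set F : Set (EuclideanSpace ℝ (Fin d)) := frontier B with hFdef
  have hFmeas : MeasurableSet F := isClosed_frontier.measurableSet
  have hμ₀F : μ₀ F = 0 := by rw [hmap F hFmeas]; exact hB0
  have hthick : Tendsto (fun r => μ₀ (cthickening r F)) (𝓝 0) (𝓝 0) := by
    have h := tendsto_measure_cthickening_of_isClosed (μ := μ₀) (s := F)
      ⟨1, one_pos, measure_ne_top _ _⟩ isClosed_frontier
    rwa [hμ₀F] at h
  have hev : ∀ᶠ r in 𝓝[>] (0:ℝ), μ₀ (cthickening r F) < ENNReal.ofReal (ε/10) :=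
    (hthick.eventually (gt_mem_nhds hof)).filter_mono nhdsWithin_le_nhds
  obtain ⟨η, hηT, hηpos⟩ := (hev.and eventually_mem_nhdsWithin).exists
  rw [Set.mem_Ioi] at hηpos
  set T : Set (EuclideanSpace ℝ (Fin d)) := cthickening η F with hTdef
  have hTmeas : MeasurableSet T := isClosed_cthickening.measurableSet
  set δ : ℝ := η / (2 * M) with hδdef
  have hδpos : (0:ℝ) < δ := div_pos hηpos (by linarith)
  have hδM : δ * M = η / 2 := by
    rw [hδdef]; field_simp
  -- combine eventually
  have h1 := hTV (ε/10) hε10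
  have h2 := hYconv (η/2) (by linarith) (ε/5) (by linarith)
  have h3 := hZconv δ hδpos (ε/5) (by linarith)
  filter_upwards [h1, h2, h3] with n hn1 hn2 hn3 ϑ
  set A := (fun ω => Z ϑ n ω • X ϑ n ω + Y ϑ n ω) ⁻¹' B with hAdef
  set C := X ϑ n ⁻¹' B with hCdef
  set E1 := {ω | η/2 ≤ ‖Y ϑ n ω‖} with hE1def
  set E2 := {ω | δ ≤ |Z ϑ n ω - 1|} with hE2def
  set E3 := X ϑ n ⁻¹' S with hE3def
  set E4 := X ϑ n ⁻¹' T with hE4def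
  have hkey : ∀ ω, ω ∉ E1 ∪ E2 ∪ E3 ∪ E4 → (ω ∈ A ↔ ω ∈ C) := by
    intro ω hω
    simp only [Set.mem_union, not_or, hE1def, hE2def, hE3def, hE4def, Set.mem_setOf_eq,
      Set.mem_preimage, hSdef, not_le] at hω
    obtain ⟨⟨⟨hY', hZ'⟩, hX'⟩, hT'⟩ := hω
    set x := X ϑ n ω
    set w := Z ϑ n ω • x + Y ϑ n ω with hwdef
    have hwx : ‖w - x‖ < η := by
      have heq : w - x = (Z ϑ n ω - 1) • x + Y ϑ n ω := by
        rw [hwdef, sub_smul, one_smul]; abel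
      rw [heq]
      calc ‖(Z ϑ n ω - 1) • x + Y ϑ n ω‖ ≤ ‖(Z ϑ n ω - 1) • x‖ + ‖Y ϑ n ω‖ :=
            norm_add_le _ _
        _ = |Z ϑ n ω - 1| * ‖x‖ + ‖Y ϑ n ω‖ := by rw [norm_smul, Real.norm_eq_abs]
        _ < δ * M + η/2 := by
            have h1 : |Z ϑ n ω - 1| * ‖x‖ ≤ |Z ϑ n ω - 1| * M :=
              mul_le_mul_of_nonneg_left hX'.le (abs_nonneg _)
            have h2 : |Z ϑ n ω - 1| * M < δ * M := mul_lt_mul_of_pos_right hZ' hMpos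
            linarith
        _ = η := by rw [hδM]; ring
    have hdisj : ∀ y ∈ Metric.ball x η, y ∉ frontier B := by
      intro y hy hyF
      exact hT' (mem_cthickening_of_dist_le x y η F hyF (le_of_lt (mem_ball'.1 hy)))
    have hwball : w ∈ Metric.ball x η := by
      rw [mem_ball_iff_norm]; exact hwx
    have hiff := aux_ball_iff hηpos hdisj hwball
    simp only [hAdef, hCdef, Set.mem_preimage]
    exact hiff
  have hincl1 : A \ C ⊆ E1 ∪ E2 ∪ E3 ∪ E4 := by
    intro ω hω
    by_contra h
    exact hω.2 ((hkey ω h).1 hω.1)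
  have hincl2 : C \ A ⊆ E1 ∪ E2 ∪ E3 ∪ E4 := by
    intro ω hω
    by_contra h
    exact hω.2 ((hkey ω h).2 hω.1)
  have hAC : |(P ϑ n A).toReal - (P ϑ n C).toReal| ≤ (P ϑ n (E1 ∪ E2 ∪ E3 ∪ E4)).toReal :=
    aux_abs_toReal_sub_le (P ϑ n) hincl1 hincl2
  have hsum : (P ϑ n (E1 ∪ E2 ∪ E3 ∪ E4)).toReal ≤
      (P ϑ n E1).toReal + (P ϑ n E2).toReal + (P ϑ n E3).toReal + (P ϑ n E4).toReal := by
    calc (P ϑ n (E1 ∪ E2 ∪ E3 ∪ E4)).toReal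
        ≤ (P ϑ n (E1 ∪ E2 ∪ E3)).toReal + (P ϑ n E4).toReal := aux_toReal_union_le _ _ _
      _ ≤ (P ϑ n (E1 ∪ E2)).toReal + (P ϑ n E3).toReal + (P ϑ n E4).toReal := by
          linarith [aux_toReal_union_le (P ϑ n) (E1 ∪ E2) E3]
      _ ≤ (P ϑ n E1).toReal + (P ϑ n E2).toReal + (P ϑ n E3).toReal + (P ϑ n E4).toReal := by
          linarith [aux_toReal_union_le (P ϑ n) E1 E2]
  have hE1b : (P ϑ n E1).toReal ≤ ε/5 := hn2 ϑ
  have hE2b : (P ϑ n E2).toReal ≤ ε/5 := hn3 ϑ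
  have hSsmall : (P₀ (X₀ ⁻¹' S)).toReal ≤ ε/10 := by
    rw [← hmap S hSmeas]
    exact ENNReal.toReal_le_of_le_ofReal hε10.le hmS.le
  have hTsmall : (P₀ (X₀ ⁻¹' T)).toReal ≤ ε/10 := by
    rw [← hmap T hTmeas]
    exact ENNReal.toReal_le_of_le_ofReal hε10.le hηT.le
  have hE3b : (P ϑ n E3).toReal ≤ ε/5 := by
    have := hn1 ϑ S hSmeas
    rw [abs_sub_le_iff] at this
    linarith [this.1]
  have hE4b : (P ϑ n E4).toReal ≤ ε/5 := by
    have := hn1 ϑ T hTmeas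
    rw [abs_sub_le_iff] at this
    linarith [this.1]
  have hCb : |(P ϑ n C).toReal - (P₀ (X₀ ⁻¹' B)).toReal| ≤ ε/10 := hn1 ϑ B hB
  calc |(P ϑ n A).toReal - (P₀ (X₀ ⁻¹' B)).toReal|
      ≤ |(P ϑ n A).toReal - (P ϑ n C).toReal| +
        |(P ϑ n C).toReal - (P₀ (X₀ ⁻¹' B)).toReal| := abs_sub_le _ _ _
    _ ≤ ε := by linarith
end

section
/- Let δ ∈ L²(ℝ) and suppose there exists p > 1 with ∫_ℝ (1+|x|)^p δ(x)² dx < ∞. Then the complex Gaussian process X(u) = ∫_ℝ e^{iux} δ(x) dW(x), u ∈ ℝ, where W is a two-sided Brownian motion, satisfies: there exists c > 0 such that E[|X(u) − X(v)|²]^{1/2} ≤ c |u − v|^α for all u, v ∈ ℝ, with α = min(p/2, 1) ∈ (1/2, 1]. -/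
open MeasureTheory Real

lemma sin_sq_le_rpow_aux (t s β : ℝ) (hs0 : 0 ≤ s) (hts : |t| ≤ s)
    (hβ0 : 0 < β) (hβ2 : β ≤ 2) : Real.sin t ^ 2 ≤ s ^ β := by
  rcases eq_or_lt_of_le hs0 with h | hs
  · have ht : t = 0 := by
      have := abs_nonneg t; have : |t| = 0 := le_antisymm (h ▸ hts) (abs_nonneg t)
      exact abs_eq_zero.mp this
    simp [ht, Real.rpow_def_of_pos, ← h, Real.zero_rpow (ne_of_gt hβ0)]
  rcases le_total s 1 with hs1 | hs1
  · have h1 : Real.sin t ^ 2 ≤ s ^ (2 : ℝ) := by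
      rw [Real.rpow_two]
      calc Real.sin t ^ 2 ≤ t ^ 2 := Real.sin_sq_le_sq
        _ = |t| ^ 2 := (sq_abs t).symm
        _ ≤ s ^ 2 := by nlinarith [abs_nonneg t]
    exact h1.trans (Real.rpow_le_rpow_of_exponent_ge hs hs1 hβ2)
  · exact (Real.sin_sq_le_one t).trans (Real.one_le_rpow hs1 hβ0.le)

theorem gaussian_process_increment_bound
    (δ : ℝ → ℝ) (hδ : MemLp δ 2 volume) (p : ℝ) (hp : 1 < p)
    (hmom : Integrable (fun x => (1 + |x|) ^ p * δ x ^ 2))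
    (α : ℝ) (hα : α = min (p / 2) 1) :
    α ∈ Set.Ioc (1/2 : ℝ) 1 ∧
    ∃ c > (0:ℝ), ∀ u v : ℝ,
      Real.sqrt (∫ x, 4 * Real.sin ((u - v) * x / 2) ^ 2 * δ x ^ 2) ≤
        c * |u - v| ^ α := by
  have hα1 : α ≤ 1 := hα ▸ min_le_right _ _
  have hαp : α ≤ p / 2 := hα ▸ min_le_left _ _
  have hαhalf : 1/2 < α := by
    rw [hα]; exact lt_min (by linarith) (by norm_num)
  have hα0 : 0 < α := by linarith
  refine ⟨⟨hαhalf, hα1⟩, ?_⟩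
  set K := ∫ x, (1 + |x|) ^ p * δ x ^ 2 with hK
  have hKnn : 0 ≤ K := integral_nonneg fun x => by positivity
  refine ⟨2 * Real.sqrt K + 1, by positivity, fun u v => ?_⟩
  set θ := |u - v| with hθ
  have hθnn : 0 ≤ θ := abs_nonneg _
  -- pointwise bound
  have hpt : ∀ x, 4 * Real.sin ((u - v) * x / 2) ^ 2 * δ x ^ 2 ≤
      4 * θ ^ (2 * α) * ((1 + |x|) ^ p * δ x ^ 2) := by
    intro x
    have hb : Real.sin ((u - v) * x / 2) ^ 2 ≤ θ ^ (2 * α) * (1 + |x|) ^ p := by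
      have h1 : Real.sin ((u - v) * x / 2) ^ 2 ≤ (θ * (1 + |x|)) ^ (2 * α) := by
        apply sin_sq_le_rpow_aux
        · positivity
        · have : |(u - v) * x / 2| = θ * |x| / 2 := by
            rw [abs_div, abs_mul]; norm_num [hθ]
          rw [this]
          nlinarith [abs_nonneg x, abs_nonneg (u - v)]
        · linarith
        · linarith
      have h2 : (θ * (1 + |x|)) ^ (2 * α) = θ ^ (2 * α) * (1 + |x|) ^ (2 * α) :=
        Real.mul_rpow hθnn (by positivity)
      have h3 : (1 + |x|) ^ (2 * α) ≤ (1 + |x|) ^ p :=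
        Real.rpow_le_rpow_of_exponent_le (by simp [abs_nonneg]) (by linarith)
      calc Real.sin ((u - v) * x / 2) ^ 2 ≤ θ ^ (2 * α) * (1 + |x|) ^ (2 * α) := by
            rw [← h2]; exact h1
        _ ≤ θ ^ (2 * α) * (1 + |x|) ^ p := by
            have : (0:ℝ) ≤ θ ^ (2 * α) := Real.rpow_nonneg hθnn _
            nlinarith
    nlinarith [sq_nonneg (δ x), Real.rpow_nonneg hθnn (2 * α),
      Real.rpow_nonneg (show (0:ℝ) ≤ 1 + |x| by positivity) p, hb,
      mul_le_mul_of_nonneg_right hb (sq_nonneg (δ x))]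
  have hint : (∫ x, 4 * Real.sin ((u - v) * x / 2) ^ 2 * δ x ^ 2) ≤
      4 * θ ^ (2 * α) * K := by
    have hgi : Integrable (fun x => 4 * θ ^ (2 * α) * ((1 + |x|) ^ p * δ x ^ 2)) :=
      hmom.const_mul _
    calc (∫ x, 4 * Real.sin ((u - v) * x / 2) ^ 2 * δ x ^ 2)
        ≤ ∫ x, 4 * θ ^ (2 * α) * ((1 + |x|) ^ p * δ x ^ 2) := by
          apply integral_mono_of_nonneg
          · filter_upwards with x; positivity
          · exact hgi
          · filter_upwards with x; exact hpt x
      _ = 4 * θ ^ (2 * α) * K := integral_const_mul _ _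
  have hsq : Real.sqrt (4 * θ ^ (2 * α) * K) = 2 * θ ^ α * Real.sqrt K := by
    have h4 : 4 * θ ^ (2 * α) = (2 * θ ^ α) ^ 2 := by
      rw [mul_pow, ← Real.rpow_natCast (θ ^ α) 2, ← Real.rpow_mul hθnn]
      norm_num; ring_nf
    rw [h4, Real.sqrt_mul (sq_nonneg _), Real.sqrt_sq (by positivity)]
  calc Real.sqrt (∫ x, 4 * Real.sin ((u - v) * x / 2) ^ 2 * δ x ^ 2)
      ≤ Real.sqrt (4 * θ ^ (2 * α) * K) := Real.sqrt_le_sqrt hint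
    _ = 2 * θ ^ α * Real.sqrt K := hsq
    _ ≤ (2 * Real.sqrt K + 1) * θ ^ α := by
        have h1 : (0:ℝ) ≤ θ ^ α := Real.rpow_nonneg hθnn _
        have h2 : (0:ℝ) ≤ Real.sqrt K := Real.sqrt_nonneg _
        nlinarith
end
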